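/- Let u : ℝ → ℝ be differentiable, let x_0,…,x_n be distinct real points with u(x_0),…,u(x_n) pairwise distinct and u'(x_i) ≠ 0 for all i, and let L_j denote the generalized Lagrange functions. Then for any indices j ≠ k with 0 ≤ j,k ≤ n, the derivative of L_j at x_k equals κ_j · w'(x_k) / (u(x_k) − u(x_j)); that is, the off-diagonal entry d_{kj} of the first-order differentiation matrix D of the generalized Lagrange functions is d_{kj} = κ_j w'(x_k)/(u_k − u_j). -/

import Mathlib

open Finset

/-- `glW u x t = ∏ i, (u t − u (x i))`. -/
noncomputable def glW (u : ℝ → ℝ) {n : ℕ} (x : Fin (n + 1) → ℝ) : ℝ → ℝ :=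
  fun t => ∏ i, (u t - u (x i))

/-- Generalized Lagrange function `L_j(t) = κ_j ∏_{i ≠ j} (u t − u (x i))`,
with `κ_j = u'(x_j) / w'(x_j)`. -/
noncomputable def glL (u : ℝ → ℝ) {n : ℕ} (x : Fin (n + 1) → ℝ) (j : Fin (n + 1)) : ℝ → ℝ :=
  fun t => (deriv u (x j) / deriv (glW u x) (x j)) *
    ∏ i ∈ Finset.univ.erase j, (u t - u (x i))

theorem gl_deriv_offdiag (n : ℕ) (u : ℝ → ℝ) (x : Fin (n + 1) → ℝ)
    (hu : Differentiable ℝ u)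
    (hx : Function.Injective x)
    (hux : Function.Injective (u ∘ x))
    (hu' : ∀ i, deriv u (x i) ≠ 0)
    (j k : Fin (n + 1)) (hjk : j ≠ k) :
    deriv (glL u x j) (x k) =
      (deriv u (x j) / deriv (glW u x) (x j)) * deriv (glW u x) (x k) /
        (u (x k) - u (x j)) := by
  set P : ℝ → ℝ := fun t => ∏ i ∈ Finset.univ.erase j, (u t - u (x i)) with hP
  have hPdiff : Differentiable ℝ P := by
    apply Differentiable.fun_finsetProd
    intro i _
    exact hu.sub_const _
  have hkmem : k ∈ Finset.univ.erase j := by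
    simp [Finset.mem_erase, Ne.symm hjk]
  have hPk : P (x k) = 0 := by
    apply Finset.prod_eq_zero hkmem
    ring
  have hne : u (x k) - u (x j) ≠ 0 := by
    intro h
    apply hjk
    exact (hux (show u (x k) = u (x j) from sub_eq_zero.mp h)).symm
  -- glW = (u - u x j) * P
  have hW : glW u x = fun t => (u t - u (x j)) * P t := by
    funext t
    simp only [glW, hP]
    rw [← Finset.mul_prod_erase _ _ (Finset.mem_univ j)]
  have hWderiv : deriv (glW u x) (x k) = (u (x k) - u (x j)) * deriv P (x k) := by
    rw [hW]
    rw [deriv_fun_mul ((hu.sub_const _).differentiableAt) (hPdiff.differentiableAt)]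
    rw [hPk]
    simp [deriv_sub_const]
  have hLderiv : deriv (glL u x j) (x k) =
      (deriv u (x j) / deriv (glW u x) (x j)) * deriv P (x k) := by
    have : glL u x j = fun t => (deriv u (x j) / deriv (glW u x) (x j)) * P t := rfl
    rw [this, deriv_const_mul _ hPdiff.differentiableAt]
  rw [hLderiv, hWderiv, mul_div_assoc, mul_div_cancel_left₀ _ hne]
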